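/- Let d ≥ 3 be odd and let k be an integer with 1 ≤ k ≤ (d−1)/2. There is a constant c > 0 (depending only on d and k) such that for every odd prime power q there are sets X, Y ⊆ 𝔽_q^d and r ∈ 𝔽_q^* with |X| ≥ c·q^{d−k−1}, |Y| = q^k, and ‖x − y‖ = r for every pair (x,y) ∈ X × Y. -/

import Mathlib

set_option linter.unusedSectionVars false

def fnorm {F : Type*} [CommRing F] {d : ℕ} (x : Fin d → F) : F := ∑ i, (x i) ^ 2

section Assembly

variable {F : Type*} [Field F] [Fintype F] [DecidableEq F]

/-- Y-side 4-block: two orthogonal isotropic vectors. -/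
def ybl (a b t0 t1 : F) : Fin 4 → F := ![t0, a*t0+b*t1, b*t0-a*t1, t1]

/-- X-side 4-block: orthogonal complement parametrization. -/
def xbl (a b x1 x2 : F) : Fin 4 → F := ![-(a*x1+b*x2), x1, x2, -(b*x1-a*x2)]

lemma blk4 (a b t0 t1 x1 x2 : F) (hab : a^2+b^2 = -1) :
    ∑ i, (xbl a b x1 x2 i - ybl a b t0 t1 i)^2 = 0 := by
  simp only [Fin.sum_univ_four, xbl, ybl, Matrix.cons_val_zero, Matrix.cons_val_one,
    Matrix.head_cons, Matrix.cons_val_two, Matrix.tail_cons, Matrix.cons_val_three]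
  linear_combination (x1^2+x2^2+t0^2+t1^2) * hab

lemma assembly (d k₂ k₁ : ℕ) (a b : F) (hab : a^2+b^2 = -1)
    (ρ : Type*) [Fintype ρ] [DecidableEq ρ]
    (hcard : 4*k₂ + Fintype.card ρ = d)
    (yρ : (Fin k₁ → F) → ρ → F) (hy : Function.Injective yρ)
    (P : Type*) [DecidableEq P] (D : Finset P) (Φ : P → ρ → F)
    (hΦ : Set.InjOn Φ D) (r : F)
    (key : ∀ p ∈ D, ∀ t' : Fin k₁ → F, ∑ i, (Φ p i - yρ t' i)^2 = r) :
    ∃ X Y : Finset (Fin d → F),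
      X.card = Fintype.card F ^ (2*k₂) * D.card ∧
      Y.card = Fintype.card F ^ (2*k₂ + k₁) ∧
      ∀ x ∈ X, ∀ y ∈ Y, fnorm (x - y) = r := by
  classical
  have hc : Fintype.card ((Fin k₂ × Fin 4) ⊕ ρ) = Fintype.card (Fin d) := by
    simp only [Fintype.card_sum, Fintype.card_prod, Fintype.card_fin]
    omega
  let E : ((Fin k₂ × Fin 4) ⊕ ρ) ≃ Fin d := Fintype.equivOfCardEq hc
  let L : ((Fin k₂ × Fin 2) → F) × (Fin k₁ → F) → Fin d → F := fun t i =>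
    Sum.elim (fun ji => ybl a b (t.1 (ji.1, 0)) (t.1 (ji.1, 1)) ji.2) (yρ t.2) (E.symm i)
  let Ψ : ((Fin k₂ × Fin 2) → F) × P → Fin d → F := fun u i =>
    Sum.elim (fun ji => xbl a b (u.1 (ji.1, 0)) (u.1 (ji.1, 1)) ji.2) (Φ u.2) (E.symm i)
  have hLval : ∀ t j, L t (E j) =
      Sum.elim (fun ji => ybl a b (t.1 (ji.1, 0)) (t.1 (ji.1, 1)) ji.2) (yρ t.2) j := by
    intro t j; simp [L]
  have hΨval : ∀ u j, Ψ u (E j) =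
      Sum.elim (fun ji => xbl a b (u.1 (ji.1, 0)) (u.1 (ji.1, 1)) ji.2) (Φ u.2) j := by
    intro u j; simp [Ψ]
  refine ⟨(Finset.univ ×ˢ D).image Ψ, Finset.univ.image L, ?_, ?_, ?_⟩
  · rw [Finset.card_image_of_injOn, Finset.card_product, Finset.card_univ]
    · congr 1
      simp [Fintype.card_fun, mul_comm]
    · intro u hu u' hu' h
      have h' : ∀ j, Ψ u (E j) = Ψ u' (E j) := fun j => congrFun h (E j)
      have h1 : u.1 = u'.1 := by
        funext ji
        obtain ⟨jj, ii⟩ := ji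
        have e1 := h' (Sum.inl (jj, 1))
        have e2 := h' (Sum.inl (jj, 2))
        rw [hΨval, hΨval] at e1 e2
        simp only [Sum.elim_inl, xbl, Matrix.cons_val_one, Matrix.head_cons,
          Matrix.cons_val_two, Matrix.tail_cons] at e1 e2
        fin_cases ii
        · exact e1
        · exact e2
      have h2 : u.2 = u'.2 := by
        simp only [Finset.coe_product, Set.mem_prod, Finset.mem_coe] at hu hu'
        refine hΦ hu.2 hu'.2 ?_
        funext i
        have := h' (Sum.inr i)
        rwa [hΨval, hΨval] at this
      exact Prod.ext h1 h2
  · rw [Finset.card_image_of_injective _ ?_, Finset.card_univ]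
    · simp [Fintype.card_fun, pow_add, mul_comm]
    · intro t t' h
      have h' : ∀ j, L t (E j) = L t' (E j) := fun j => congrFun h (E j)
      have h1 : t.1 = t'.1 := by
        funext ji
        obtain ⟨jj, ii⟩ := ji
        have e1 := h' (Sum.inl (jj, 0))
        have e2 := h' (Sum.inl (jj, 3))
        rw [hLval, hLval] at e1 e2
        simp only [Sum.elim_inl, ybl, Matrix.cons_val_zero, Matrix.cons_val_three,
          Matrix.tail_cons, Matrix.head_cons, Matrix.cons_val_one, Matrix.cons_val_two] at e1 e2
        fin_cases ii
        · exact e1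
        · exact e2
      have h2 : t.2 = t'.2 := by
        refine hy ?_
        funext i
        have := h' (Sum.inr i)
        rwa [hLval, hLval] at this
      exact Prod.ext h1 h2
  · intro x hx y hy'
    simp only [Finset.mem_image, Finset.mem_product] at hx hy'
    obtain ⟨u, hu, rfl⟩ := hx
    obtain ⟨t, -, rfl⟩ := hy'
    have : fnorm (Ψ u - L t) = ∑ j, (Ψ u (E j) - L t (E j))^2 := by
      rw [fnorm, ← Equiv.sum_comp E (fun i => ((Ψ u - L t) i)^2)]
      simp [Pi.sub_apply]
    rw [this]
    rw [Fintype.sum_sum_type]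
    have hinl : ∀ jj : Fin k₂ × Fin 4, (Ψ u (E (Sum.inl jj)) - L t (E (Sum.inl jj)))^2
        = (xbl a b (u.1 (jj.1, 0)) (u.1 (jj.1, 1)) jj.2 - ybl a b (t.1 (jj.1, 0)) (t.1 (jj.1, 1)) jj.2)^2 := by
      intro jj; rw [hΨval, hLval]; simp
    have hinr : ∀ i : ρ, (Ψ u (E (Sum.inr i)) - L t (E (Sum.inr i)))^2
        = (Φ u.2 i - yρ t.2 i)^2 := by
      intro i; rw [hΨval, hLval]; simp
    rw [Finset.sum_congr rfl (fun jj _ => hinl jj), Finset.sum_congr rfl (fun i _ => hinr i)]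
    rw [Fintype.sum_prod_type]
    have : ∀ jj : Fin k₂, ∑ ii : Fin 4,
        (xbl a b (u.1 (jj, 0)) (u.1 (jj, 1)) ii - ybl a b (t.1 (jj, 0)) (t.1 (jj, 1)) ii)^2 = 0 :=
      fun jj => blk4 a b _ _ _ _ hab
    rw [Finset.sum_congr rfl (fun jj _ => this jj), Finset.sum_const, smul_zero, zero_add]
    exact key u.2 hu.2 t.2

/-! ### The four cases -/

lemma sq_add_sq_neg_one (F : Type*) [Field F] [Fintype F] (h : Fintype.card F % 2 = 1) :
    ∃ a b : F, a^2 + b^2 = -1 := by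
  obtain ⟨a, b, hab⟩ := FiniteField.exists_root_sum_quadratic
    (f := Polynomial.X^2 + Polynomial.C 1) (g := Polynomial.X^2)
    (Polynomial.degree_X_pow_add_C (by norm_num) 1) (Polynomial.degree_X_pow 2) h
  refine ⟨a, b, ?_⟩
  simp only [Polynomial.eval_add, Polynomial.eval_pow, Polynomial.eval_X,
    Polynomial.eval_C] at hab
  linear_combination hab

lemma caseA (d k₂ : ℕ) (a b : F) (hab : a^2+b^2 = -1) (hcard : 4*k₂ + 1 = d) :
    ∃ X Y : Finset (Fin d → F),
      X.card = Fintype.card F ^ (2*k₂) ∧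
      Y.card = Fintype.card F ^ (2*k₂ + 0) ∧
      ∀ x ∈ X, ∀ y ∈ Y, fnorm (x - y) = 1 := by
  obtain ⟨X, Y, hX, hY, hdist⟩ := assembly d k₂ 0 a b hab (Fin 1)
    (by simpa using hcard)
    (fun _ => 0) (fun x y _ => funext fun i => i.elim0)
    Unit Finset.univ (fun _ _ => 1)
    (fun x _ y _ _ => Subsingleton.elim x y)
    1 (by intro p _ t'; simp)
  exact ⟨X, Y, by simpa using hX, hY, hdist⟩

lemma caseC (d k₂ : ℕ) (a b : F) (hab : a^2+b^2 = -1) (hcard : 4*k₂ + 3 = d) :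
    ∃ X Y : Finset (Fin d → F),
      X.card = Fintype.card F ^ (2*k₂) * Fintype.card F ∧
      Y.card = Fintype.card F ^ (2*k₂ + 1) ∧
      ∀ x ∈ X, ∀ y ∈ Y, fnorm (x - y) = -1 := by
  obtain ⟨X, Y, hX, hY, hdist⟩ := assembly d k₂ 1 a b hab (Fin 3)
    (by simpa using hcard)
    (fun σ i => σ 0 * ![1,a,b] i)
    (by
      intro σ σ' h
      have h0 := congrFun h 0
      simp only [Matrix.cons_val_zero, mul_one] at h0
      funext j
      have hj : j = 0 := Subsingleton.elim _ _
      rw [hj]; exact h0)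
    F Finset.univ
    (fun u => ![-(a*(-b+u*a)+b*(a+u*b)), -b+u*a, a+u*b])
    (by
      intro u _ u' _ h
      have e1 := congrFun h 1
      have e2 := congrFun h 2
      simp only [Matrix.cons_val_one, Matrix.head_cons, Matrix.cons_val_two,
        Matrix.tail_cons, Matrix.cons_val_zero] at e1 e2
      linear_combination -a*e1 - b*e2 + (u - u')*hab)
    (-1)
    (by
      intro u _ σ
      rw [Fin.sum_univ_three]
      simp only [Matrix.cons_val_zero, Matrix.cons_val_one, Matrix.head_cons,
        Matrix.cons_val_two, Matrix.tail_cons, mul_one]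
      linear_combination (u^2*(a^2+b^2) + 1 + (σ 0)^2) * hab)
  exact ⟨X, Y, by simpa using hX, hY, hdist⟩

lemma caseB (d k₂ t' : ℕ) (a b : F) (hab : a^2+b^2 = -1) (h2 : (2:F) ≠ 0)
    (hcard : 4*k₂ + (3 + t') = d) :
    ∃ X Y : Finset (Fin d → F),
      X.card = Fintype.card F ^ (2*k₂) *
        ((Fintype.card F - 1) * (Fintype.card F * Fintype.card F ^ t')) ∧
      Y.card = Fintype.card F ^ (2*k₂ + 0) ∧
      ∀ x ∈ X, ∀ y ∈ Y, fnorm (x - y) = 1 := by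
  have h4 : ∀ α : F, α ≠ 0 → (4*α)*(4*α)⁻¹ = 1 := by
    intro α hα
    refine mul_inv_cancel₀ (mul_ne_zero ?_ hα)
    intro h; apply h2
    have h4' : (4:F) = 2*2 := by norm_num
    rcases mul_eq_zero.mp (h4' ▸ h) with h' | h' <;> exact h'
  obtain ⟨X, Y, hX, hY, hdist⟩ := assembly d k₂ 0 a b hab (Fin 3 ⊕ Fin t')
    (by simp only [Fintype.card_sum, Fintype.card_fin]; omega)
    (fun _ => 0) (fun x y _ => funext fun i => i.elim0)
    (F × F × (Fin t' → F)) ((Finset.univ.erase 0) ×ˢ Finset.univ)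
    (fun p => Sum.elim
      ![p.1 + (1 - (∑ i, (p.2.2 i)^2) + p.2.1^2) * (4*p.1)⁻¹,
        a*(p.1 - (1 - (∑ i, (p.2.2 i)^2) + p.2.1^2) * (4*p.1)⁻¹) - b*p.2.1,
        b*(p.1 - (1 - (∑ i, (p.2.2 i)^2) + p.2.1^2) * (4*p.1)⁻¹) + a*p.2.1]
      p.2.2)
    (by
      rintro ⟨α, γ, z⟩ hp ⟨α', γ', z'⟩ hp' h
      have hz : z = z' := funext fun i => by
        have := congrFun h (Sum.inr i); simpa using this
      subst hz
      have e0 := congrFun h (Sum.inl 0)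
      have e1 := congrFun h (Sum.inl 1)
      have e2 := congrFun h (Sum.inl 2)
      simp only [Sum.elim_inl, Matrix.cons_val_zero, Matrix.cons_val_one, Matrix.head_cons,
        Matrix.cons_val_two, Matrix.tail_cons] at e0 e1 e2
      have hγ : γ = γ' := by linear_combination b*e1 - a*e2 + (γ - γ')*hab
      have hα : α = α' := by
        refine mul_left_cancel₀ h2 ?_
        linear_combination e0 - a*e1 - b*e2 +
          ((α - (1 - (∑ i, (z i)^2) + γ^2)*(4*α)⁻¹) -
            (α' - (1 - (∑ i, (z i)^2) + γ'^2)*(4*α')⁻¹))*hab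
      rw [hα, hγ])
    1
    (by
      rintro ⟨α, γ, z⟩ hp t''
      have hα : α ≠ 0 := by
        have := (Finset.mem_product.mp hp).1
        simpa using this
      rw [Fintype.sum_sum_type, Fin.sum_univ_three]
      simp only [Sum.elim_inl, Sum.elim_inr, Matrix.cons_val_zero, Matrix.cons_val_one,
        Matrix.head_cons, Matrix.cons_val_two, Matrix.tail_cons, sub_zero, Pi.zero_apply]
      linear_combination ((α - (1 - (∑ i, (z i)^2) + γ^2)*(4*α)⁻¹)^2 + γ^2)*hab +
        (1 - (∑ i, (z i)^2) + γ^2)*(h4 α hα))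
  refine ⟨X, Y, ?_, hY, hdist⟩
  rw [hX]
  congr 1
  rw [Finset.card_product, Finset.card_erase_of_mem (Finset.mem_univ _), Finset.card_univ,
    Finset.card_univ, Fintype.card_prod, Fintype.card_fun, Fintype.card_fin]

lemma caseD (d k₂ t' : ℕ) (a b : F) (hab : a^2+b^2 = -1) (h2 : (2:F) ≠ 0)
    (hcard : 4*k₂ + (3 + (t'+1)) = d) :
    ∃ X Y : Finset (Fin d → F),
      X.card = Fintype.card F ^ (2*k₂) *
        ((Fintype.card F - 1) * (Fintype.card F * Fintype.card F ^ t')) ∧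
      Y.card = Fintype.card F ^ (2*k₂ + 1) ∧
      ∀ x ∈ X, ∀ y ∈ Y, fnorm (x - y) = 1 := by
  have h2a : ∀ α : F, α ≠ 0 → (2*α)*(2*α)⁻¹ = 1 :=
    fun α hα => mul_inv_cancel₀ (mul_ne_zero h2 hα)
  obtain ⟨X, Y, hX, hY, hdist⟩ := assembly d k₂ 1 a b hab (Fin 3 ⊕ Fin (t'+1))
    (by simp only [Fintype.card_sum, Fintype.card_fin]; omega)
    (fun σ i => σ 0 * (Sum.elim ![1,a,b] 0 i))
    (by
      intro σ σ' h
      have h0 := congrFun h (Sum.inl 0)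
      simp only [Sum.elim_inl, Matrix.cons_val_zero, mul_one] at h0
      funext j
      have hj : j = 0 := Subsingleton.elim _ _
      rw [hj]; exact h0)
    (F × F × (Fin t' → F)) ((Finset.univ.erase 0) ×ˢ Finset.univ)
    (fun p => Sum.elim
      ![-(a*(-(((1 - (∑ i, (p.2.2 i)^2) - p.1^2)*(2*p.1)⁻¹)*b)+p.2.1*a)
          + b*((((1 - (∑ i, (p.2.2 i)^2) - p.1^2)*(2*p.1)⁻¹)*a)+p.2.1*b)),
        -(((1 - (∑ i, (p.2.2 i)^2) - p.1^2)*(2*p.1)⁻¹)*b)+p.2.1*a,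
        (((1 - (∑ i, (p.2.2 i)^2) - p.1^2)*(2*p.1)⁻¹)*a)+p.2.1*b]
      (Fin.cons ((p.1^2 + 1 - (∑ i, (p.2.2 i)^2))*(2*p.1)⁻¹) p.2.2))
    (by
      rintro ⟨α, w, z⟩ hp ⟨α', w', z'⟩ hp' h
      have hα0 : α ≠ 0 := by
        have := (Finset.mem_product.mp hp).1
        simpa using this
      have hα0' : α' ≠ 0 := by
        have := (Finset.mem_product.mp hp').1
        simpa using this
      have hz : z = z' := funext fun i => by
        have := congrFun h (Sum.inr i.succ); simpa using this
      subst hz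
      have ez0 := congrFun h (Sum.inr 0)
      have e1 := congrFun h (Sum.inl 1)
      have e2 := congrFun h (Sum.inl 2)
      simp only [Sum.elim_inl, Sum.elim_inr, Fin.cons_zero, Matrix.cons_val_one,
        Matrix.head_cons, Matrix.cons_val_two, Matrix.tail_cons, Matrix.cons_val_zero] at ez0 e1 e2
      have hw : w = w' := by linear_combination -a*e1 - b*e2 + (w - w')*hab
      have es : (1 - (∑ i, (z i)^2) - α^2)*(2*α)⁻¹
          = (1 - (∑ i, (z i)^2) - α'^2)*(2*α')⁻¹ := by
        linear_combination b*e1 - a*e2 +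
          ((1 - (∑ i, (z i)^2) - α^2)*(2*α)⁻¹ - (1 - (∑ i, (z i)^2) - α'^2)*(2*α')⁻¹)*hab
      have hα : α = α' := by
        linear_combination ez0 - es - α*(h2a α hα0) + α'*(h2a α' hα0')
      rw [hα, hw])
    1
    (by
      rintro ⟨α, w, z⟩ hp σ
      have hα : α ≠ 0 := by
        have := (Finset.mem_product.mp hp).1
        simpa using this
      rw [Fintype.sum_sum_type, Fin.sum_univ_three, Fin.sum_univ_succ]
      simp only [Sum.elim_inl, Sum.elim_inr, Matrix.cons_val_zero, Matrix.cons_val_one,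
        Matrix.head_cons, Matrix.cons_val_two, Matrix.tail_cons, Fin.cons_zero, Fin.cons_succ,
        Pi.zero_apply, mul_zero, sub_zero, mul_one]
      linear_combination (w^2*(a^2+b^2) + (σ 0)^2 +
          ((1 - (∑ i, (z i)^2) - α^2)*(2*α)⁻¹)^2)*hab +
        ((1 - (∑ i, (z i)^2))*((2*α)*(2*α)⁻¹+1))*(h2a α hα))
  refine ⟨X, Y, ?_, hY, hdist⟩
  rw [hX]
  congr 1
  rw [Finset.card_product, Finset.card_erase_of_mem (Finset.mem_univ _), Finset.card_univ,
    Finset.card_univ, Fintype.card_prod, Fintype.card_fun, Fintype.card_fin]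

end Assembly


/-! ### Numeric helpers -/

lemma half_le {n m : ℕ} (h : n ≤ 2*m) : (1/2 : ℝ) * (n:ℝ) ≤ (m:ℝ) := by
  have h' := (Nat.cast_le (α := ℝ)).2 h
  push_cast at h'
  linarith

lemma boundBD (q A t : ℕ) (hq : 2 ≤ q) :
    q ^ (A + t + 2) ≤ 2 * (q^A * ((q-1) * (q * q^t))) := by
  have h1 : q ≤ 2*(q-1) := by omega
  have h0 : q^(A+t+2) = q^A * q^t * q * q := by rw [pow_add, pow_add]; ring
  calc q^(A+t+2) = q^A * q^t * q * q := h0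
    _ ≤ q^A * q^t * q * (2*(q-1)) := Nat.mul_le_mul_left _ h1
    _ = 2*(q^A*((q-1)*(q*q^t))) := by ring

theorem single_distance_construction (d k : ℕ) (hd : 3 ≤ d) (hdo : Odd d)
    (hk : 1 ≤ k) (hk' : k ≤ (d - 1) / 2) :
    ∃ c : ℝ, 0 < c ∧
      ∀ (q : ℕ), Odd q → IsPrimePow q →
      ∀ (F : Type) [Field F] [Fintype F] [DecidableEq F], Fintype.card F = q →
      ∃ (X Y : Finset (Fin d → F)) (r : F), r ≠ 0 ∧
        c * (q : ℝ) ^ (d - k - 1) ≤ (X.card : ℝ) ∧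
        Y.card = q ^ k ∧
        ∀ x ∈ X, ∀ y ∈ Y, fnorm (x - y) = r := by
  refine ⟨1/2, by norm_num, ?_⟩
  intro q hq hpp F _ _ _ hF
  have hq2 : 2 ≤ q := hpp.two_le
  have hcardF : Fintype.card F % 2 = 1 := by rw [hF]; exact Nat.odd_iff.mp hq
  have hchar : ringChar F ≠ 2 := by
    intro h
    have := FiniteField.even_card_iff_char_two.mp h
    omega
  have h2 : (2:F) ≠ 0 := Ring.two_ne_zero hchar
  obtain ⟨a, b, hab⟩ := sq_add_sq_neg_one F hcardF
  obtain ⟨j, hj⟩ := hdo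
  have hdk : 2*k + 1 ≤ d := by omega
  rcases Nat.even_or_odd k with hke | hko
  · obtain ⟨k₂, hk₂⟩ := hke
    by_cases hdm : d = 2*k+1
    · obtain ⟨X, Y, hX, hY, hdist⟩ := caseA d k₂ a b hab (by omega)
      refine ⟨X, Y, 1, one_ne_zero, ?_, ?_, hdist⟩
      · have he : d - k - 1 = 2*k₂ := by omega
        have hineq : q^(d-k-1) ≤ 2 * X.card := by
          rw [hX, hF, he]
          exact Nat.le_mul_of_pos_left _ (by norm_num)
        have := half_le hineq
        push_cast at this
        exact this
      · rw [hY, hF]; congr 1; omega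
    · obtain ⟨X, Y, hX, hY, hdist⟩ := caseB d k₂ (d - 2*k - 3) a b hab h2 (by omega)
      refine ⟨X, Y, 1, one_ne_zero, ?_, ?_, hdist⟩
      · have he : d - k - 1 = 2*k₂ + (d - 2*k - 3) + 2 := by omega
        have hineq : q^(d-k-1) ≤ 2 * X.card := by
          rw [hX, hF, he]
          exact boundBD q (2*k₂) (d - 2*k - 3) hq2
        have := half_le hineq
        push_cast at this
        exact this
      · rw [hY, hF]; congr 1; omega
  · obtain ⟨k₂, hk₂⟩ := hko
    by_cases hdm : d = 2*k+1
    · obtain ⟨X, Y, hX, hY, hdist⟩ := caseC d k₂ a b hab (by omega)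
      refine ⟨X, Y, -1, neg_ne_zero.mpr one_ne_zero, ?_, ?_, hdist⟩
      · have he : d - k - 1 = 2*k₂ + 1 := by omega
        have hineq : q^(d-k-1) ≤ 2 * X.card := by
          rw [hX, hF, he, pow_succ]
          exact Nat.le_mul_of_pos_left _ (by norm_num)
        have := half_le hineq
        push_cast at this
        exact this
      · rw [hY, hF]; congr 1; omega
    · obtain ⟨X, Y, hX, hY, hdist⟩ := caseD d k₂ (d - 2*k - 2) a b hab h2 (by omega)
      refine ⟨X, Y, 1, one_ne_zero, ?_, ?_, hdist⟩
      · have he : d - k - 1 = 2*k₂ + (d - 2*k - 2) + 2 := by omega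
        have hineq : q^(d-k-1) ≤ 2 * X.card := by
          rw [hX, hF, he]
          exact boundBD q (2*k₂) (d - 2*k - 2) hq2
        have := half_le hineq
        push_cast at this
        exact this
      · rw [hY, hF]; congr 1; omega
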